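/- Let Ω be a Stokes domain of type (1) (∂Ω is a single connected Stokes curve 𝒞 through the turning point a, with Im 𝔖_a = 0 on ∂Ω and Im 𝔖_a > 0 on Ω). Then {Im 𝔖_a(x) : x ∈ Ω} = (0, +∞), i.e. μ = sup_{x∈Ω} Im 𝔖_a(x) = +∞. -/

import Mathlib

open Set Filter Complex Topology

/-- A sequence increasing to `u` from below, with quantitative bounds. -/
private lemma seq_to_sup {u : ℝ} (hu : 0 < u) :
    ∃ v : ℕ → ℝ, (∀ n, 0 ≤ v n) ∧ (∀ n, v n < u) ∧
      (∀ N n, N ≤ n → u - u * (1 / (N + 1)) ≤ v n) ∧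
      Filter.Tendsto v Filter.atTop (𝓝 u) := by
  refine ⟨fun n => u - u * (1 / (n + 1)), ?_, ?_, ?_, ?_⟩
  · intro n
    have h1 : (1 : ℝ) / (n + 1) ≤ 1 := by
      rw [div_le_one (by positivity)]; linarith [Nat.cast_nonneg (α := ℝ) n]
    nlinarith
  · intro n
    have h1 : (0 : ℝ) < 1 / (n + 1) := by positivity
    nlinarith
  · intro N n hNn
    have h1 : (1 : ℝ) / (n + 1) ≤ 1 / (N + 1) := by
      apply one_div_le_one_div_of_le (by positivity)
      have := (Nat.cast_le (α := ℝ)).2 hNn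
      linarith
    nlinarith
  · have h := tendsto_one_div_add_atTop_nhds_zero_nat.const_mul u
    have h2 : Filter.Tendsto (fun n : ℕ => u - u * (1 / (n + 1))) Filter.atTop (𝓝 (u - u * 0)) :=
      Filter.Tendsto.sub tendsto_const_nhds h
    simpa using h2

private lemma key_lift (sq S : ℂ → ℂ) (Ω : Set ℂ) (hΩ : IsOpen Ω)
    (hScont : ContinuousOn S (closure Ω))
    (hSd : ∀ x ∈ Ω, HasDerivAt S (sq x) x)
    (hsq0 : ∀ x ∈ Ω, sq x ≠ 0)
    (hbd : ∀ x ∈ frontier Ω, (S x).im = 0)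
    (hbound : ∀ G : Set ℂ, IsClosed G → G ⊆ Ω → ∃ m : ℝ, 0 < m ∧ ∀ x ∈ G, m ≤ ‖sq x‖)
    (x₀ : ℂ) (hx₀ : x₀ ∈ Ω) (hc : 0 < (S x₀).im) (T : ℝ) (hT : 0 ≤ T) :
    ∃ x ∈ Ω, S x = S x₀ + (T : ℂ) * Complex.I := by
  -- strict differentiability
  have hdiff : DifferentiableOn ℂ S Ω := fun y hy =>
    (hSd y hy).differentiableAt.differentiableWithinAt
  have hstrict : ∀ x ∈ Ω, HasStrictDerivAt S (sq x) x := by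
    intro x hx
    have han : AnalyticAt ℂ S x := hdiff.analyticAt (hΩ.mem_nhds hx)
    have h2 : HasStrictDerivAt S (fderiv ℂ S x 1) x := han.hasStrictFDerivAt.hasStrictDerivAt
    rwa [fderiv_apply_one_eq_deriv, (hSd x hx).deriv] at h2
  -- local inverse data
  have hloc : ∀ y ∈ Ω, ∃ (V U : Set ℂ) (g : ℂ → ℂ), IsOpen V ∧ y ∈ V ∧ Set.InjOn S V ∧
      IsOpen U ∧ S y ∈ U ∧ g (S y) = y ∧ ContinuousOn g U ∧ ∀ w ∈ U, S (g w) = w := by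
    intro y hy
    have hst := (hstrict y hy).hasStrictFDerivAt_equiv (hsq0 y hy)
    set e := hst.toOpenPartialHomeomorph S with he
    have hcoe : (e : ℂ → ℂ) = S := hst.toOpenPartialHomeomorph_coe
    have hsrc : y ∈ e.source := hst.mem_toOpenPartialHomeomorph_source
    refine ⟨e.source, e.target, e.symm, e.open_source, hsrc, ?_, e.open_target, ?_, ?_,
      e.continuousOn_symm, ?_⟩
    · rw [← hcoe]; exact e.injOn
    · rw [← hcoe]; exact e.map_source hsrc
    · rw [← hcoe]; exact e.left_inv hsrc
    · intro w hw; rw [← hcoe]; exact e.right_inv hw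
  -- the closed set F
  set F : Set ℂ := {x | x ∈ closure Ω ∧ (S x).re = (S x₀).re ∧
      (S x₀).im ≤ (S x).im ∧ (S x).im ≤ (S x₀).im + T} with hFdef
  have hFclosed : IsClosed F := by
    have hFeq : F = closure Ω ∩ S ⁻¹' {w : ℂ | w.re = (S x₀).re ∧
        (S x₀).im ≤ w.im ∧ w.im ≤ (S x₀).im + T} := by
      ext x; simp only [hFdef, mem_setOf_eq, mem_inter_iff, mem_preimage]
    rw [hFeq]
    apply hScont.preimage_isClosed_of_isClosed isClosed_closure
    have : {w : ℂ | w.re = (S x₀).re ∧ (S x₀).im ≤ w.im ∧ w.im ≤ (S x₀).im + T} =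
        {w : ℂ | w.re = (S x₀).re} ∩ ({w : ℂ | (S x₀).im ≤ w.im} ∩
          {w : ℂ | w.im ≤ (S x₀).im + T}) := by
      ext w; simp only [mem_setOf_eq, mem_inter_iff]
    rw [this]
    exact (isClosed_eq Complex.continuous_re continuous_const).inter
      ((isClosed_le continuous_const Complex.continuous_im).inter
        (isClosed_le Complex.continuous_im continuous_const))
  have hFΩ : F ⊆ Ω := by
    rintro x ⟨hxcl, -, hge, -⟩
    rcases (closure_eq_self_union_frontier Ω ▸ hxcl) with h | h
    · exact h
    · exact absurd (hbd x h) (by intro h0; rw [h0] at hge; linarith)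
  have hmemF : ∀ (x : ℂ) (s : ℝ), 0 ≤ s → s ≤ T → x ∈ Ω →
      S x = S x₀ + (s : ℂ) * Complex.I → x ∈ F := by
    intro x s hs0 hsT hxΩ hSx
    refine ⟨subset_closure hxΩ, ?_, ?_, ?_⟩
    · rw [hSx]; simp
    · rw [hSx]; simp; linarith
    · rw [hSx]; simp; linarith
  obtain ⟨m, hm, hmF⟩ := hbound F hFclosed hFΩ
  set C := m⁻¹ with hCdef
  have hC : 0 < C := by positivity
  -- the lifting predicate
  set P : ℝ → Prop := fun t => ∃ γ : ℝ → ℂ, γ 0 = x₀ ∧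
      (∀ s, 0 ≤ s → s ≤ t → γ s ∈ Ω ∧ S (γ s) = S x₀ + (s : ℂ) * Complex.I) ∧
      (∀ s₁ s₂, 0 ≤ s₁ → s₁ ≤ s₂ → s₂ ≤ t → ‖γ s₂ - γ s₁‖ ≤ C * (s₂ - s₁)) with hPdef
  -- continuity from the Lipschitz property
  have hcont : ∀ (t : ℝ) (γ : ℝ → ℂ),
      (∀ s₁ s₂, 0 ≤ s₁ → s₁ ≤ s₂ → s₂ ≤ t → ‖γ s₂ - γ s₁‖ ≤ C * (s₂ - s₁)) →
      ContinuousOn γ (Icc 0 t) := by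
    intro t γ hlip
    have : LipschitzOnWith (Real.toNNReal C) γ (Icc 0 t) := by
      apply LipschitzOnWith.of_dist_le_mul
      intro x hx y hy
      rw [Real.coe_toNNReal _ hC.le, dist_eq_norm, Real.dist_eq]
      rcases le_total x y with h | h
      · rw [norm_sub_rev, _root_.abs_of_nonpos (by linarith)]
        have := hlip x y hx.1 h hy.2
        linarith
      · rw [_root_.abs_of_nonneg (by linarith)]
        exact hlip y x hy.1 h hx.2
    exact this.continuousOn
  -- uniqueness of lifts
  have huniq : ∀ t, 0 ≤ t → ∀ γ₁ γ₂ : ℝ → ℂ, γ₁ 0 = x₀ → γ₂ 0 = x₀ →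
      (∀ s, 0 ≤ s → s ≤ t → γ₁ s ∈ Ω ∧ S (γ₁ s) = S x₀ + (s : ℂ) * Complex.I) →
      (∀ s, 0 ≤ s → s ≤ t → γ₂ s ∈ Ω ∧ S (γ₂ s) = S x₀ + (s : ℂ) * Complex.I) →
      ContinuousOn γ₁ (Icc 0 t) → ContinuousOn γ₂ (Icc 0 t) →
      ∀ s, 0 ≤ s → s ≤ t → γ₁ s = γ₂ s := by
    intro t ht γ₁ γ₂ h01 h02 hp1 hp2 hc1 hc2
    set B : Set ℝ := {u | 0 ≤ u ∧ u ≤ t ∧ ∀ s, 0 ≤ s → s ≤ u → γ₁ s = γ₂ s} with hBdef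
    have hB0 : (0 : ℝ) ∈ B := by
      refine ⟨le_refl 0, ht, fun s h h' => ?_⟩
      have hs : s = 0 := le_antisymm h' h
      rw [hs, h01, h02]
    have hBbdd : BddAbove B := ⟨t, fun u hu => hu.2.1⟩
    have hBne : B.Nonempty := ⟨0, hB0⟩
    have hu₀0 : 0 ≤ sSup B := le_csSup hBbdd hB0
    have hu₀t : sSup B ≤ t := csSup_le hBne fun u hu => hu.2.1
    have hlt : ∀ s, 0 ≤ s → s < sSup B → γ₁ s = γ₂ s := by
      intro s hs0 hsu
      obtain ⟨u, hu, hsu'⟩ := exists_lt_of_lt_csSup hBne hsu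
      exact hu.2.2 s hs0 hsu'.le
    have heq : γ₁ (sSup B) = γ₂ (sSup B) := by
      rcases eq_or_lt_of_le hu₀0 with h0 | h0
      · rw [← h0, h01, h02]
      · obtain ⟨v, hv0, hvlt, -, hvt⟩ := seq_to_sup h0
        have hvmem : ∀ n, v n ∈ Icc (0 : ℝ) t :=
          fun n => ⟨hv0 n, ((hvlt n).le.trans hu₀t)⟩
        have hvt' : Tendsto v atTop (𝓝[Icc (0:ℝ) t] (sSup B)) :=
          tendsto_nhdsWithin_of_tendsto_nhds_of_eventually_within v hvt
            (Eventually.of_forall hvmem)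
        have ht1 : Tendsto (fun n => γ₁ (v n)) atTop (𝓝 (γ₁ (sSup B))) :=
          (hc1 (sSup B) ⟨hu₀0, hu₀t⟩).tendsto.comp hvt'
        have ht2 : Tendsto (fun n => γ₂ (v n)) atTop (𝓝 (γ₂ (sSup B))) :=
          (hc2 (sSup B) ⟨hu₀0, hu₀t⟩).tendsto.comp hvt'
        have heqv : (fun n => γ₁ (v n)) = fun n => γ₂ (v n) :=
          funext fun n => hlt (v n) (hv0 n) (hvlt n)
        rw [heqv] at ht1
        exact tendsto_nhds_unique ht1 ht2
    have huB : sSup B ∈ B := by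
      refine ⟨hu₀0, hu₀t, fun s hs0 hs' => ?_⟩
      rcases lt_or_eq_of_le hs' with h | h
      · exact hlt s hs0 h
      · rw [h]; exact heq
    have hu₀eq : sSup B = t := by
      by_contra hne
      have hut : sSup B < t := lt_of_le_of_ne hu₀t hne
      have hyΩ : γ₁ (sSup B) ∈ Ω := (hp1 (sSup B) hu₀0 hu₀t).1
      obtain ⟨V, U, g, hVo, hyV, hVinj, -, -, -, -, -⟩ := hloc (γ₁ (sSup B)) hyΩ
      have hcw1 : ContinuousWithinAt γ₁ (Icc 0 t) (sSup B) := hc1 (sSup B) ⟨hu₀0, hu₀t⟩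
      have hcw2 : ContinuousWithinAt γ₂ (Icc 0 t) (sSup B) := hc2 (sSup B) ⟨hu₀0, hu₀t⟩
      have hev1 : γ₁ ⁻¹' V ∈ 𝓝[Icc (0:ℝ) t] (sSup B) := hcw1 (hVo.mem_nhds hyV)
      have hev2 : γ₂ ⁻¹' V ∈ 𝓝[Icc (0:ℝ) t] (sSup B) :=
        hcw2 (hVo.mem_nhds (by rw [← heq]; exact hyV))
      obtain ⟨O, hOopen, hOmem, hOsub⟩ := mem_nhdsWithin.1 (inter_mem hev1 hev2)
      obtain ⟨δ, hδ, hball⟩ := Metric.isOpen_iff.1 hOopen (sSup B) hOmem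
      have hu'1 : sSup B < min (sSup B + δ / 2) t := lt_min (by linarith) hut
      have hu't : min (sSup B + δ / 2) t ≤ t := min_le_right _ _
      have hu'B : min (sSup B + δ / 2) t ∈ B := by
        refine ⟨hu₀0.trans hu'1.le, hu't, fun s hs0 hsu' => ?_⟩
        rcases le_or_gt s (sSup B) with h | h
        · exact huB.2.2 s hs0 h
        · have hsO : s ∈ O := by
            apply hball
            rw [Metric.mem_ball, Real.dist_eq, _root_.abs_of_nonneg (by linarith)]
            have hle : s ≤ sSup B + δ / 2 := hsu'.trans (min_le_left _ _)
            linarith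
          have hsIcc : s ∈ Icc (0:ℝ) t := ⟨hs0, hsu'.trans hu't⟩
          obtain ⟨h1V, h2V⟩ := hOsub ⟨hsO, hsIcc⟩
          apply hVinj h1V h2V
          rw [(hp1 s hs0 hsIcc.2).2, (hp2 s hs0 hsIcc.2).2]
      have := le_csSup hBbdd hu'B
      linarith
    intro s hs0 hst
    exact huB.2.2 s hs0 (hu₀eq ▸ hst)
  -- base point
  have hP0 : P 0 := by
    refine ⟨fun _ => x₀, rfl, fun s hs0 hs1 => ?_, fun s₁ s₂ h1 h2 h3 => ?_⟩
    · have hs : s = 0 := le_antisymm hs1 hs0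
      rw [hs]; exact ⟨hx₀, by simp⟩
    · have e1 : s₁ = 0 := le_antisymm (h2.trans h3) h1
      have e2 : s₂ = 0 := le_antisymm h3 (h1.trans h2)
      rw [e1, e2]; simp
  -- extension step
  have hext : ∀ t₀, 0 ≤ t₀ → t₀ < T → P t₀ → ∃ t₁, t₀ < t₁ ∧ t₁ ≤ T ∧ P t₁ := by
    intro t₀ ht₀0 ht₀T hPt₀
    obtain ⟨γ, hγ0, hγp, hγl⟩ := hPt₀
    have hyΩ : γ t₀ ∈ Ω := (hγp t₀ ht₀0 le_rfl).1
    have hSy : S (γ t₀) = S x₀ + (t₀ : ℂ) * Complex.I := (hγp t₀ ht₀0 le_rfl).2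
    obtain ⟨V, U, g, hVo, hyV, hVinj, hUo, hSyU, hgy, hgc, hginv⟩ := hloc (γ t₀) hyΩ
    set w : ℝ → ℂ := fun s => S x₀ + (s : ℂ) * Complex.I with hwdef
    have hwcont : Continuous w :=
      continuous_const.add (Complex.continuous_ofReal.mul continuous_const)
    have hw0 : w t₀ = S (γ t₀) := hSy.symm
    have hw0U : w t₀ ∈ U := by rw [hw0]; exact hSyU
    set h : ℝ → ℂ := fun s => g (w s) with hhdef
    have hht₀ : h t₀ = γ t₀ := by
      show g (w t₀) = γ t₀
      rw [hw0, hgy]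
    have hhc : ContinuousAt h t₀ :=
      (hgc.continuousAt (hUo.mem_nhds hw0U)).comp hwcont.continuousAt
    have hev : ∀ᶠ s in 𝓝 t₀, w s ∈ U ∧ h s ∈ Ω := by
      refine (hwcont.continuousAt.eventually_mem (hUo.mem_nhds hw0U)).and ?_
      exact hhc.eventually_mem (hΩ.mem_nhds (by rw [hht₀]; exact hyΩ))
    obtain ⟨δ, hδ, hballP⟩ := Metric.eventually_nhds_iff.1 hev
    have hε : 0 < min (δ / 2) (T - t₀) := lt_min (by linarith) (by linarith)
    set ε := min (δ / 2) (T - t₀) with hεdef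
    set t₁ := t₀ + ε with ht₁def
    have ht₁T : t₁ ≤ T := by
      have : ε ≤ T - t₀ := min_le_right _ _
      simp only [ht₁def]; linarith
    have hseg : ∀ s, t₀ ≤ s → s ≤ t₁ → w s ∈ U ∧ h s ∈ Ω := by
      intro s h1 h2
      apply hballP
      rw [Real.dist_eq, _root_.abs_of_nonneg (by linarith)]
      have he1 : ε ≤ δ / 2 := min_le_left _ _
      have he2 : s - t₀ ≤ ε := by simp only [ht₁def] at h2; linarith
      linarith
    have hhF : ∀ s, t₀ ≤ s → s ≤ t₁ → h s ∈ F := by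
      intro s h1 h2
      have hws := hseg s h1 h2
      exact hmemF (h s) s (ht₀0.trans h1) (h2.trans ht₁T) hws.2 (hginv _ hws.1)
    have hder : ∀ s ∈ Icc t₀ t₁,
        HasDerivWithinAt h ((sq (h s))⁻¹ * Complex.I) (Icc t₀ t₁) s := by
      intro s hs
      have hws := hseg s hs.1 hs.2
      have hgw : g (w s) ∈ Ω := hws.2
      have hgd : HasStrictDerivAt g (sq (g (w s)))⁻¹ (w s) :=
        HasStrictDerivAt.of_local_left_inverse (hgc.continuousAt (hUo.mem_nhds hws.1))
          (hstrict _ hgw) (hsq0 _ hgw) (eventually_of_mem (hUo.mem_nhds hws.1) hginv)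
      have hinner : HasDerivAt (fun z : ℂ => S x₀ + z * Complex.I) Complex.I (s : ℂ) := by
        simpa using ((hasDerivAt_id (s : ℂ)).mul_const Complex.I).const_add (S x₀)
      have hcomp : HasDerivAt (fun z : ℂ => g (S x₀ + z * Complex.I))
          ((sq (h s))⁻¹ * Complex.I) (s : ℂ) := by
        have hcc := HasDerivAt.comp (s : ℂ) (hgd.hasDerivAt) hinner
        exact hcc
      exact hcomp.comp_ofReal.hasDerivWithinAt
    have hbound' : ∀ s ∈ Icc t₀ t₁, ‖(sq (h s))⁻¹ * Complex.I‖ ≤ C := by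
      intro s hs
      have hFm := hhF s hs.1 hs.2
      have hmle := hmF _ hFm
      rw [norm_mul, Complex.norm_I, mul_one, norm_inv, hCdef]
      have h1 : 0 < ‖sq (h s)‖ := lt_of_lt_of_le hm hmle
      rw [inv_le_inv₀ h1 hm]
      exact hmle
    have hlipnew : ∀ s₁ s₂, t₀ ≤ s₁ → s₁ ≤ s₂ → s₂ ≤ t₁ → ‖h s₂ - h s₁‖ ≤ C * (s₂ - s₁) := by
      intro s₁ s₂ h1 h12 h2
      have := (convex_Icc t₀ t₁).norm_image_sub_le_of_norm_hasDerivWithin_le hder hbound'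
        ⟨h1, h12.trans h2⟩ ⟨h1.trans h12, h2⟩
      rwa [Real.norm_eq_abs, _root_.abs_of_nonneg (by linarith)] at this
    refine ⟨t₁, by simp only [ht₁def]; linarith, ht₁T, ?_⟩
    refine ⟨fun s => if s ≤ t₀ then γ s else h s, by simp only [if_pos ht₀0]; exact hγ0, ?_, ?_⟩
    · intro s hs0 hst₁
      by_cases hcs : s ≤ t₀
      · simp only [if_pos hcs]
        exact hγp s hs0 hcs
      · push_neg at hcs
        simp only [if_neg (not_le.2 hcs)]
        exact ⟨(hseg s hcs.le hst₁).2, hginv _ (hseg s hcs.le hst₁).1⟩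
    · intro s₁ s₂ h1 h12 h2
      rcases le_or_gt s₂ t₀ with hA | hA
      · simp only [if_pos (h12.trans hA), if_pos hA]
        exact hγl s₁ s₂ h1 h12 hA
      · rcases le_or_gt s₁ t₀ with hB | hB
        · simp only [if_pos hB, if_neg (not_le.2 hA)]
          have tri : ‖h s₂ - γ s₁‖ ≤ ‖h s₂ - h t₀‖ + ‖h t₀ - γ s₁‖ := by
            have := dist_triangle (h s₂) (h t₀) (γ s₁)
            simpa [dist_eq_norm] using this
          have b1 : ‖h s₂ - h t₀‖ ≤ C * (s₂ - t₀) := hlipnew t₀ s₂ le_rfl hA.le h2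
          have b2 : ‖h t₀ - γ s₁‖ ≤ C * (t₀ - s₁) := by
            rw [hht₀]
            exact hγl s₁ t₀ h1 hB le_rfl
          calc ‖h s₂ - γ s₁‖ ≤ C * (s₂ - t₀) + C * (t₀ - s₁) := le_trans tri (add_le_add b1 b2)
            _ = C * (s₂ - s₁) := by ring
        · simp only [if_neg (not_le.2 hB), if_neg (not_le.2 (hB.trans_le h12))]
          exact hlipnew s₁ s₂ hB.le h12 h2
  -- main continuity induction
  set A : Set ℝ := {t | 0 ≤ t ∧ t ≤ T ∧ P t} with hAdef
  have hA0 : (0 : ℝ) ∈ A := ⟨le_refl 0, hT, hP0⟩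
  have hAne : A.Nonempty := ⟨0, hA0⟩
  have hAbdd : BddAbove A := ⟨T, fun t ht => ht.2.1⟩
  have ht₂0 : 0 ≤ sSup A := le_csSup hAbdd hA0
  have ht₂T : sSup A ≤ T := csSup_le hAne fun t ht => ht.2.1
  have hdown : ∀ t ∈ A, ∀ u, 0 ≤ u → u ≤ t → u ∈ A := by
    rintro t ⟨-, htT, γ, hγ0, hγp, hγl⟩ u h0 hut
    exact ⟨h0, hut.trans htT, γ, hγ0,
      fun s hs hsu => hγp s hs (hsu.trans hut),
      fun s₁ s₂ a' b' c' => hγl s₁ s₂ a' b' (c'.trans hut)⟩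
  have hPt₂ : P (sSup A) := by
    rcases eq_or_lt_of_le ht₂0 with h0 | h0
    · rw [← h0]; exact hP0
    · have hchoice : ∀ u, u ∈ A → P u := fun u hu => hu.2.2
      classical
      set Γ : ℝ → ℂ := fun u => if hu : u ∈ A then Classical.choose (hchoice u hu) u else x₀
        with hΓdef
      have hΓval : ∀ u (hu : u ∈ A) s, 0 ≤ s → s ≤ u →
          Γ s = Classical.choose (hchoice u hu) s := by
        intro u hu s hs0 hsu
        have hsA : s ∈ A := hdown u hu s hs0 hsu
        obtain ⟨g0s, gps, gls⟩ := Classical.choose_spec (hchoice s hsA)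
        obtain ⟨g0u, gpu, glu⟩ := Classical.choose_spec (hchoice u hu)
        simp only [hΓdef, dif_pos hsA]
        exact huniq s hs0 _ _ g0s g0u gps
          (fun s' h1 h2 => gpu s' h1 (h2.trans hsu))
          (hcont s _ gls)
          (hcont s _ (fun s₁ s₂ a b c' => glu s₁ s₂ a b (c'.trans hsu)))
          s hs0 le_rfl
      obtain ⟨v, hv0, hvlt, hvbd, hvt⟩ := seq_to_sup h0
      have hΓp : ∀ s, 0 ≤ s → s < sSup A →
          Γ s ∈ Ω ∧ S (Γ s) = S x₀ + (s : ℂ) * Complex.I := by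
        intro s hs0 hst
        obtain ⟨u, hu, hsu⟩ := exists_lt_of_lt_csSup hAne hst
        obtain ⟨g0, gp, gl⟩ := Classical.choose_spec (hchoice u hu)
        rw [hΓval u hu s hs0 hsu.le]
        exact gp s hs0 hsu.le
      have hΓl : ∀ s₁ s₂, 0 ≤ s₁ → s₁ ≤ s₂ → s₂ < sSup A →
          ‖Γ s₂ - Γ s₁‖ ≤ C * (s₂ - s₁) := by
        intro s₁ s₂ h1 h12 h2
        obtain ⟨u, hu, hsu⟩ := exists_lt_of_lt_csSup hAne h2
        obtain ⟨g0, gp, gl⟩ := Classical.choose_spec (hchoice u hu)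
        rw [hΓval u hu s₁ h1 (h12.trans hsu.le), hΓval u hu s₂ (h1.trans h12) hsu.le]
        exact gl s₁ s₂ h1 h12 hsu.le
      have hCauchy : CauchySeq (fun n => Γ (v n)) := by
        refine cauchySeq_of_le_tendsto_0 (fun N : ℕ => C * (sSup A * (1 / ((N : ℝ) + 1)))) ?_ ?_
        · intro n m N hn hm
          have hb : ∀ p q : ℕ, N ≤ p → N ≤ q → v p ≤ v q →
              dist (Γ (v p)) (Γ (v q)) ≤ C * (sSup A * (1 / (N + 1))) := by
            intro p q hp hq hpq
            rw [dist_eq_norm, norm_sub_rev]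
            have hstep := hΓl (v p) (v q) (hv0 p) hpq (hvlt q)
            have h3 : v q - v p ≤ sSup A * (1 / (N + 1)) := by
              have hb1 := hvbd N p hp
              have hb2 := (hvlt q).le
              linarith
            nlinarith
          rcases le_total (v n) (v m) with hvv | hvv
          · exact hb n m hn hm hvv
          · rw [dist_comm]; exact hb m n hm hn hvv
        · have h1 := tendsto_one_div_add_atTop_nhds_zero_nat.const_mul (sSup A)
          have h2 := h1.const_mul C
          simpa using h2
      obtain ⟨L, hL⟩ := cauchySeq_tendsto_of_complete hCauchy
      have hΓF : ∀ n, Γ (v n) ∈ F := fun n =>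
        hmemF _ (v n) (hv0 n) ((hvlt n).le.trans ht₂T) (hΓp (v n) (hv0 n) (hvlt n)).1
          (hΓp (v n) (hv0 n) (hvlt n)).2
      have hLF : L ∈ F := hFclosed.mem_of_tendsto hL (Eventually.of_forall hΓF)
      have hLΩ : L ∈ Ω := hFΩ hLF
      have hSL : S L = S x₀ + ((sSup A : ℝ) : ℂ) * Complex.I := by
        have hLcl : L ∈ closure Ω := hLF.1
        have h1 : Tendsto (fun n => S (Γ (v n))) atTop (𝓝 (S L)) := by
          apply (hScont.continuousWithinAt hLcl).tendsto.comp
          apply tendsto_nhdsWithin_of_tendsto_nhds_of_eventually_within _ hL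
          exact Eventually.of_forall fun n => subset_closure (hΓp (v n) (hv0 n) (hvlt n)).1
        have h2 : Tendsto (fun n => S x₀ + ((v n : ℝ) : ℂ) * Complex.I) atTop
            (𝓝 (S x₀ + ((sSup A : ℝ) : ℂ) * Complex.I)) := by
          apply Tendsto.const_add
          exact ((Complex.continuous_ofReal.tendsto (sSup A)).comp hvt).mul_const Complex.I
        have heqf : (fun n => S (Γ (v n))) = fun n => S x₀ + ((v n : ℝ) : ℂ) * Complex.I :=
          funext fun n => (hΓp (v n) (hv0 n) (hvlt n)).2
        rw [heqf] at h1
        exact tendsto_nhds_unique h1 h2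
      refine ⟨fun s => if s < sSup A then Γ s else L, ?_, ?_, ?_⟩
      · simp only [if_pos h0]
        have h00 : Γ 0 = Classical.choose (hchoice 0 hA0) 0 := hΓval 0 hA0 0 le_rfl le_rfl
        rw [h00]
        exact (Classical.choose_spec (hchoice 0 hA0)).1
      · intro s hs0 hst
        rcases lt_or_eq_of_le hst with hlt' | heq'
        · simp only [if_pos hlt']; exact hΓp s hs0 hlt'
        · rw [heq']
          simp only [lt_irrefl, if_false]
          exact ⟨hLΩ, hSL⟩
      · intro s₁ s₂ h1 h12 h2
        rcases lt_or_eq_of_le h2 with hlt' | heq'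
        · simp only [if_pos (lt_of_le_of_lt h12 hlt'), if_pos hlt']
          exact hΓl s₁ s₂ h1 h12 hlt'
        · rcases lt_or_eq_of_le (heq' ▸ h12 : s₁ ≤ sSup A) with hs1 | hs1
          · rw [heq']
            simp only [if_pos hs1, lt_irrefl, if_false]
            have hevge : ∀ᶠ n in atTop, s₁ ≤ v n :=
              (hvt.eventually (eventually_gt_nhds hs1)).mono fun n hn => hn.le
            have hbnd : ∀ᶠ n in atTop, ‖Γ (v n) - Γ s₁‖ ≤ C * (sSup A - s₁) := by
              filter_upwards [hevge] with n hn
              calc ‖Γ (v n) - Γ s₁‖ ≤ C * (v n - s₁) := hΓl s₁ (v n) h1 hn (hvlt n)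
                _ ≤ C * (sSup A - s₁) := by nlinarith [(hvlt n).le, hC.le]
            have htnorm : Tendsto (fun n => ‖Γ (v n) - Γ s₁‖) atTop (𝓝 ‖L - Γ s₁‖) :=
              (hL.sub tendsto_const_nhds).norm
            exact le_of_tendsto htnorm hbnd
          · rw [heq', ← hs1]
            simp only [lt_irrefl, if_false]
            have : s₁ = s₂ := by rw [hs1, heq']
            rw [hs1]
            simp
  have ht₂eq : sSup A = T := by
    by_contra hne
    have hlt' : sSup A < T := lt_of_le_of_ne ht₂T hne
    obtain ⟨t₃, h3, h3T, hP3⟩ := hext (sSup A) ht₂0 hlt' hPt₂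
    have : t₃ ≤ sSup A := le_csSup hAbdd ⟨ht₂0.trans h3.le, h3T, hP3⟩
    linarith
  rw [ht₂eq] at hPt₂
  obtain ⟨γ, hγ0, hγp, -⟩ := hPt₂
  exact ⟨γ T, (hγp T hT le_rfl).1, (hγp T hT le_rfl).2⟩

/-- For a Stokes domain `Ω` of type (1) (`Im 𝔖_a > 0` on `Ω`,
`Im 𝔖_a = 0` on `∂Ω`), the set `{Im 𝔖_a(x) : x ∈ Ω}` equals `(0, +∞)`,
i.e. `μ = sup Im 𝔖_a = +∞`. -/
theorem stmt16 (Q : Polynomial ℂ) (a : ℂ) (ha : Q.eval a = 0)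
    (sq S : ℂ → ℂ) (Ω : Set ℂ)
    (hΩ : IsOpen Ω) (hΩc : IsConnected Ω) (haΩ : a ∈ frontier Ω)
    (hQ : ∀ x ∈ Ω, Q.eval x ≠ 0)
    (hsq : ∀ x ∈ Ω, sq x ^ 2 = Q.eval x)
    (hsqd : DifferentiableOn ℂ sq Ω)
    (hScont : ContinuousOn S (closure Ω))
    (hSd : ∀ x ∈ Ω, HasDerivAt S (sq x) x)
    (hSa : S a = 0)
    (hpos : ∀ x ∈ Ω, 0 < (S x).im)
    (hbd : ∀ x ∈ frontier Ω, (S x).im = 0) :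
    (fun x => (S x).im) '' Ω = Set.Ioi (0 : ℝ) := by
  obtain ⟨x₁, hx₁⟩ := hΩc.nonempty
  have hsq0 : ∀ x ∈ Ω, sq x ≠ 0 := by
    intro x hx h
    exact hQ x hx (by rw [← hsq x hx, h]; ring)
  have hQdeg : 0 < Q.degree := by
    by_contra h
    push_neg at h
    have hQC := Polynomial.eq_C_of_degree_le_zero h
    apply hQ x₁ hx₁
    have h0 : Q.coeff 0 = 0 := by
      have := ha
      rw [hQC] at this
      simpa using this
    rw [hQC, h0]
    simp
  have hbound : ∀ G : Set ℂ, IsClosed G → G ⊆ Ω → ∃ m : ℝ, 0 < m ∧ ∀ x ∈ G, m ≤ ‖sq x‖ := by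
    intro G hGc hGΩ
    have hQb : ∃ m : ℝ, 0 < m ∧ ∀ x ∈ G, m ≤ ‖Q.eval x‖ := by
      have htend : Tendsto (fun x : ℂ => ‖Q.eval x‖) (cocompact ℂ) atTop :=
        Q.tendsto_norm_atTop hQdeg tendsto_norm_cocompact_atTop
      have hev : ∀ᶠ x in cocompact ℂ, 1 ≤ ‖Q.eval x‖ := htend.eventually_ge_atTop 1
      obtain ⟨K, hKc, hKsub⟩ := mem_cocompact.1 hev
      have hGK : IsCompact (G ∩ K) := hKc.inter_left hGc
      rcases (G ∩ K).eq_empty_or_nonempty with he | hne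
      · refine ⟨1, one_pos, fun x hx => ?_⟩
        have hxK : x ∉ K := fun hk => absurd (mem_inter hx hk) (by rw [he]; exact notMem_empty x)
        exact hKsub hxK
      · obtain ⟨z, hzGK, hzmin⟩ := hGK.exists_isMinOn hne (Q.continuous.norm.continuousOn)
        refine ⟨min 1 ‖Q.eval z‖, lt_min one_pos (norm_pos_iff.2 (hQ z (hGΩ hzGK.1))), ?_⟩
        intro x hx
        by_cases hxK : x ∈ K
        · exact le_trans (min_le_right _ _) (hzmin ⟨hx, hxK⟩)
        · exact le_trans (min_le_left _ _) (hKsub hxK)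
    obtain ⟨m, hm, hmQ⟩ := hQb
    refine ⟨Real.sqrt m, Real.sqrt_pos.2 hm, fun x hx => ?_⟩
    have h2 : ‖sq x‖ ^ 2 = ‖Q.eval x‖ := by rw [← hsq x (hGΩ hx), norm_pow]
    have hle : m ≤ ‖sq x‖ ^ 2 := h2 ▸ hmQ x hx
    calc Real.sqrt m ≤ Real.sqrt (‖sq x‖ ^ 2) := Real.sqrt_le_sqrt hle
      _ = ‖sq x‖ := by rw [Real.sqrt_sq (norm_nonneg _)]
  apply subset_antisymm
  · rintro y ⟨x, hx, rfl⟩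
    exact hpos x hx
  · intro y hy
    have hy0 : 0 < y := hy
    have hacl : a ∈ closure Ω := frontier_subset_closure haΩ
    have hnb : (𝓝[Ω] a).NeBot := mem_closure_iff_nhdsWithin_neBot.1 hacl
    have hcw : ContinuousWithinAt S (closure Ω) a := hScont.continuousWithinAt hacl
    have h1 : Tendsto S (𝓝[Ω] a) (𝓝 0) := by
      rw [← hSa]
      exact hcw.tendsto.mono_left (nhdsWithin_mono a subset_closure)
    have h2 : Tendsto (fun x => (S x).im) (𝓝[Ω] a) (𝓝 0) := by
      have := (Complex.continuous_im.tendsto 0).comp h1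
      simpa [Function.comp_def] using this
    have h3 : ∀ᶠ x in 𝓝[Ω] a, (S x).im < y := h2 (Iio_mem_nhds hy0)
    obtain ⟨x₀, hx₀y, hx₀Ω⟩ := (h3.and eventually_mem_nhdsWithin).exists
    have hT : 0 ≤ y - (S x₀).im := by
      have := hx₀y
      linarith
    obtain ⟨x, hxΩ, hxS⟩ := key_lift sq S Ω hΩ hScont hSd hsq0 hbd hbound x₀ hx₀Ω
      (hpos x₀ hx₀Ω) (y - (S x₀).im) hT
    refine ⟨x, hxΩ, ?_⟩
    show (S x).im = y
    rw [hxS]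
    simp
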